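/- Let N be a Nijenhuis operator on a compatible 3-Lie algebra (g,[·,·,·],{·,·,·}). Then (g,[·,·,·]_N,{·,·,·}_N) is again a compatible 3-Lie algebra, and N is a compatible 3-Lie algebra homomorphism from (g,[·,·,·]_N,{·,·,·}_N) to (g,[·,·,·],{·,·,·}). -/
import Mathlib


section Defs

/-- A map `G × G × G → H` is trilinear if it is linear in each argument. -/
def IsTrilinearMap (K : Type*) {G H : Type*} [Field K] [AddCommGroup G] [Module K G]
    [AddCommGroup H] [Module K H] (b : G → G → G → H) : Prop :=
  (∀ y z, IsLinearMap K (fun x => b x y z)) ∧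
  (∀ x z, IsLinearMap K (fun y => b x y z)) ∧
  (∀ x y, IsLinearMap K (fun z => b x y z))

/-- Skew-symmetry of a ternary bracket. -/
def IsSkewSym {G H : Type*} [AddCommGroup G] [AddCommGroup H] (b : G → G → G → H) : Prop :=
  (∀ x y z, b x y z = - b y x z) ∧ (∀ x y z, b x y z = - b x z y)

/-- The Fundamental Identity of a 3-Lie algebra. -/
def FundIdent {G : Type*} [AddCommGroup G] (b : G → G → G → G) : Prop :=
  ∀ x₁ x₂ x₃ x₄ x₅, b x₁ x₂ (b x₃ x₄ x₅) =
    b (b x₁ x₂ x₃) x₄ x₅ + b x₃ (b x₁ x₂ x₄) x₅ + b x₃ x₄ (b x₁ x₂ x₅)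

/-- A 3-Lie algebra structure: a skew-symmetric trilinear bracket satisfying
the Fundamental Identity. -/
def Is3Lie (K : Type*) {G : Type*} [Field K] [AddCommGroup G] [Module K G]
    (b : G → G → G → G) : Prop :=
  IsTrilinearMap K b ∧ IsSkewSym b ∧ FundIdent b

/-- The compatibility condition (2.4) between two ternary brackets. -/
def Compat {G : Type*} [AddCommGroup G] (b₁ b₂ : G → G → G → G) : Prop :=
  ∀ x₁ x₂ x₃ x₄ x₅,
    b₁ x₁ x₂ (b₂ x₃ x₄ x₅) + b₂ x₁ x₂ (b₁ x₃ x₄ x₅) =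
    b₁ (b₂ x₁ x₂ x₃) x₄ x₅ + b₂ (b₁ x₁ x₂ x₃) x₄ x₅
    + b₁ x₃ (b₂ x₁ x₂ x₄) x₅ + b₂ x₃ (b₁ x₁ x₂ x₄) x₅
    + b₁ x₃ x₄ (b₂ x₁ x₂ x₅) + b₂ x₃ x₄ (b₁ x₁ x₂ x₅)

/-- The linear combination `k₁ • b₁ + k₂ • b₂` of two ternary brackets. -/
def combBracket {K G : Type*} [Field K] [AddCommGroup G] [Module K G]
    (k₁ k₂ : K) (b₁ b₂ : G → G → G → G) : G → G → G → G :=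
  fun x y z => k₁ • b₁ x y z + k₂ • b₂ x y z

/-- Nijenhuis operator condition for a ternary bracket. -/
def IsNijenhuis {K G : Type*} [Field K] [AddCommGroup G] [Module K G]
    (b : G → G → G → G) (N : G →ₗ[K] G) : Prop :=
  ∀ x y z, b (N x) (N y) (N z) =
    N (b (N x) (N y) z + b x (N y) (N z) + b (N x) y (N z)
      - N (b (N x) y z) - N (b x (N y) z) - N (b x y (N z)) + N (N (b x y z)))

/-- The deformed bracket `[·,·,·]_N` associated to a linear map `N`. -/
def deformedBracket {K G : Type*} [Field K] [AddCommGroup G] [Module K G]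
    (b : G → G → G → G) (N : G →ₗ[K] G) : G → G → G → G :=
  fun x y z =>
    b (N x) (N y) z + b x (N y) (N z) + b (N x) y (N z)
      - N (b (N x) y z) - N (b x (N y) z) - N (b x y (N z)) + N (N (b x y z))

/-- The mixed (degree one) compatibility/cocycle condition between two brackets
`b₁, b₂` and two 2-cochains `w₁, w₂`: the sum of the mixed versions of the
compatibility condition. -/
def MixedCocycleCond {G : Type*} [AddCommGroup G]
    (b₁ b₂ w₁ w₂ : G → G → G → G) : Prop :=
  ∀ x₁ x₂ x₃ x₄ x₅,
    b₁ x₁ x₂ (w₂ x₃ x₄ x₅) + w₂ x₁ x₂ (b₁ x₃ x₄ x₅)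
    + b₂ x₁ x₂ (w₁ x₃ x₄ x₅) + w₁ x₁ x₂ (b₂ x₃ x₄ x₅) =
    b₁ (w₂ x₁ x₂ x₃) x₄ x₅ + w₂ (b₁ x₁ x₂ x₃) x₄ x₅
    + b₂ (w₁ x₁ x₂ x₃) x₄ x₅ + w₁ (b₂ x₁ x₂ x₃) x₄ x₅
    + b₁ x₃ (w₂ x₁ x₂ x₄) x₅ + w₂ x₃ (b₁ x₁ x₂ x₄) x₅
    + b₂ x₃ (w₁ x₁ x₂ x₄) x₅ + w₁ x₃ (b₂ x₁ x₂ x₄) x₅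
    + b₁ x₃ x₄ (w₂ x₁ x₂ x₅) + w₂ x₃ x₄ (b₁ x₁ x₂ x₅)
    + b₂ x₃ x₄ (w₁ x₁ x₂ x₅) + w₁ x₃ x₄ (b₂ x₁ x₂ x₅)

/-- `ρ : Λ²g → gl(V)` as a skew-symmetric bilinear map into endomorphisms. -/
def IsRepMap (K : Type*) {G V : Type*} [Field K] [AddCommGroup G] [Module K G]
    [AddCommGroup V] [Module K V] (ρ : G → G → Module.End K V) : Prop :=
  (∀ y, IsLinearMap K (fun x => ρ x y)) ∧ (∀ x, IsLinearMap K (fun y => ρ x y)) ∧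
  (∀ x y, ρ x y = - ρ y x)

/-- The representation conditions of a 3-Lie algebra. -/
def Is3LieRep {K G V : Type*} [Field K] [AddCommGroup G] [Module K G]
    [AddCommGroup V] [Module K V] (b : G → G → G → G)
    (ρ : G → G → Module.End K V) : Prop :=
  (∀ x₁ x₂ x₃ x₄, ρ x₁ x₂ * ρ x₃ x₄ =
      ρ (b x₁ x₂ x₃) x₄ + ρ x₃ (b x₁ x₂ x₄) + ρ x₃ x₄ * ρ x₁ x₂) ∧
  (∀ x₁ x₂ x₃ x₄, ρ x₁ (b x₂ x₃ x₄) =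
      ρ x₃ x₄ * ρ x₁ x₂ - ρ x₂ x₄ * ρ x₁ x₃ + ρ x₂ x₃ * ρ x₁ x₄)

/-- The two mixed compatibility identities of a representation of a compatible
3-Lie algebra. -/
def CompatRep {K G V : Type*} [Field K] [AddCommGroup G] [Module K G]
    [AddCommGroup V] [Module K V] (b₁ b₂ : G → G → G → G)
    (ρ μ : G → G → Module.End K V) : Prop :=
  (∀ x₁ x₂ x₃ x₄,
    ρ (b₂ x₁ x₂ x₃) x₄ + μ (b₁ x₁ x₂ x₃) x₄ + ρ x₃ (b₂ x₁ x₂ x₄) + μ x₃ (b₁ x₁ x₂ x₄)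
      = (ρ x₁ x₂ * μ x₃ x₄ - μ x₃ x₄ * ρ x₁ x₂)
        - (ρ x₃ x₄ * μ x₁ x₂ - μ x₁ x₂ * ρ x₃ x₄)) ∧
  (∀ x₁ x₂ x₃ x₄,
    ρ (b₂ x₁ x₂ x₃) x₄ + μ (b₁ x₁ x₂ x₃) x₄ - ρ x₃ x₁ * μ x₂ x₄ - μ x₃ x₁ * ρ x₂ x₄
      = ρ x₁ x₂ * μ x₃ x₄ + μ x₁ x₂ * ρ x₃ x₄ + ρ x₂ x₃ * μ x₁ x₄ + μ x₂ x₃ * ρ x₁ x₄)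

/-- The semidirect product bracket on `g ⊕ V`. -/
def sdBracket {K G V : Type*} [Field K] [AddCommGroup G] [Module K G]
    [AddCommGroup V] [Module K V] (b : G → G → G → G)
    (ρ : G → G → Module.End K V) : G × V → G × V → G × V → G × V :=
  fun p q r => (b p.1 q.1 r.1, ρ p.1 q.1 r.2 + ρ q.1 r.1 p.2 + ρ r.1 p.1 q.2)

/-- The 2-cocycle expression of a 2-cochain `w` with coefficients in a
representation `ρ` of the 3-Lie algebra `(g,b)`. -/
def CocycleExpr {K G V : Type*} [Field K] [AddCommGroup G] [Module K G]
    [AddCommGroup V] [Module K V] (b : G → G → G → G)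
    (ρ : G → G → Module.End K V) (w : G → G → G → V) (x₁ x₂ x₃ x₄ x₅ : G) : V :=
  w x₁ x₂ (b x₃ x₄ x₅) - w (b x₁ x₂ x₃) x₄ x₅ - w x₃ (b x₁ x₂ x₄) x₅
    - w x₃ x₄ (b x₁ x₂ x₅)
  + ρ x₁ x₂ (w x₃ x₄ x₅) - ρ x₃ x₄ (w x₁ x₂ x₅) - ρ x₄ x₅ (w x₁ x₂ x₃)
    - ρ x₅ x₃ (w x₁ x₂ x₄)

/-- The bracket on `g ⊕ V` twisted by a 2-cochain `w`. -/
def extBracket {K G V : Type*} [Field K] [AddCommGroup G] [Module K G]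
    [AddCommGroup V] [Module K V] (b : G → G → G → G)
    (ρ : G → G → Module.End K V) (w : G → G → G → V) :
    G × V → G × V → G × V → G × V :=
  fun p q r => (b p.1 q.1 r.1,
    ρ p.1 q.1 r.2 + ρ q.1 r.1 p.2 + ρ r.1 p.1 q.2 + w p.1 q.1 r.1)



section Aux

variable {K G : Type*} [Field K] [AddCommGroup G] [Module K G]

-- slot lemmas
theorem t1a {b : G → G → G → G} (h : IsTrilinearMap K b) (u v y z : G) :
    b (u + v) y z = b u y z + b v y z := (h.1 y z).map_add u v

theorem t1s {b : G → G → G → G} (h : IsTrilinearMap K b) (c : K) (u y z : G) :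
    b (c • u) y z = c • b u y z := (h.1 y z).map_smul c u

theorem t2a {b : G → G → G → G} (h : IsTrilinearMap K b) (x u v z : G) :
    b x (u + v) z = b x u z + b x v z := (h.2.1 x z).map_add u v

theorem t2s {b : G → G → G → G} (h : IsTrilinearMap K b) (c : K) (x u z : G) :
    b x (c • u) z = c • b x u z := (h.2.1 x z).map_smul c u

theorem t3a {b : G → G → G → G} (h : IsTrilinearMap K b) (x y u v : G) :
    b x y (u + v) = b x y u + b x y v := (h.2.2 x y).map_add u v

theorem t3s {b : G → G → G → G} (h : IsTrilinearMap K b) (c : K) (x y u : G) :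
    b x y (c • u) = c • b x y u := (h.2.2 x y).map_smul c u

theorem tri_add {b₁ b₂ : G → G → G → G} (h₁ : IsTrilinearMap K b₁)
    (h₂ : IsTrilinearMap K b₂) :
    IsTrilinearMap K (fun x y z => b₁ x y z + b₂ x y z) := by
  refine ⟨fun y z => ⟨fun u v => ?_, fun c u => ?_⟩,
         fun x z => ⟨fun u v => ?_, fun c u => ?_⟩,
         fun x y => ⟨fun u v => ?_, fun c u => ?_⟩⟩ <;> dsimp only
  · rw [t1a h₁, t1a h₂]; abel
  · rw [t1s h₁, t1s h₂, smul_add]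
  · rw [t2a h₁, t2a h₂]; abel
  · rw [t2s h₁, t2s h₂, smul_add]
  · rw [t3a h₁, t3a h₂]; abel
  · rw [t3s h₁, t3s h₂, smul_add]

/-- the degree-one piece of the deformation -/
def nuB {K G : Type*} [Field K] [AddCommGroup G] [Module K G]
    (b : G → G → G → G) (N : G →ₗ[K] G) : G → G → G → G :=
  fun x y z => b (N x) y z + b x (N y) z + b x y (N z) - N (b x y z)

variable {N : G →ₗ[K] G} {b : G → G → G → G}

theorem tri_nu (hb : IsTrilinearMap K b) : IsTrilinearMap K (nuB b N) := by
  refine ⟨fun y z => ⟨fun u v => ?_, fun c u => ?_⟩,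
         fun x z => ⟨fun u v => ?_, fun c u => ?_⟩,
         fun x y => ⟨fun u v => ?_, fun c u => ?_⟩⟩ <;>
    simp only [nuB, map_add, map_smul, t1a hb, t1s hb, t2a hb, t2s hb, t3a hb, t3s hb] <;>
    module

theorem tri_deformed (hb : IsTrilinearMap K b) :
    IsTrilinearMap K (deformedBracket b N) := by
  refine ⟨fun y z => ⟨fun u v => ?_, fun c u => ?_⟩,
         fun x z => ⟨fun u v => ?_, fun c u => ?_⟩,
         fun x y => ⟨fun u v => ?_, fun c u => ?_⟩⟩ <;>
    simp only [deformedBracket, map_add, map_smul, t1a hb, t1s hb, t2a hb, t2s hb,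
      t3a hb, t3s hb] <;>
    module

theorem skew_deformed (hsk : IsSkewSym b) : IsSkewSym (deformedBracket b N) := by
  constructor
  · intro x y z
    simp only [deformedBracket]
    rw [hsk.1 (N x) (N y) z, hsk.1 x (N y) (N z), hsk.1 (N x) y (N z),
      hsk.1 (N x) y z, hsk.1 x (N y) z, hsk.1 x y (N z), hsk.1 x y z]
    simp only [map_neg]
    abel
  · intro x y z
    simp only [deformedBracket]
    rw [hsk.2 (N x) (N y) z, hsk.2 x (N y) (N z), hsk.2 (N x) y (N z),
      hsk.2 (N x) y z, hsk.2 x (N y) z, hsk.2 x y (N z), hsk.2 x y z]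
    simp only [map_neg]
    abel

end Aux

section Aux2

variable {K G : Type*} [Field K] [AddCommGroup G] [Module K G]
variable {N : G →ₗ[K] G} {b : G → G → G → G}

/-- the quadratic-in-t deformation polynomial -/
def Pt {K G : Type*} [Field K] [AddCommGroup G] [Module K G]
    (b : G → G → G → G) (N : G →ₗ[K] G) (t : K) : G → G → G → G :=
  fun x y z => b x y z + t • nuB b N x y z + t ^ 2 • deformedBracket b N x y z

theorem star_eq (hb : IsTrilinearMap K b) (hN : IsNijenhuis b N) (t : K) (x y z : G) :
    b (x + t • N x) (y + t • N y) (z + t • N z) =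
      Pt b N t x y z + t • N (Pt b N t x y z) := by
  simp only [t1a hb, t2a hb, t3a hb, t1s hb, t2s hb, t3s hb]
  rw [hN x y z]
  simp only [Pt, nuB, deformedBracket, map_add, map_sub, map_smul]
  module

/-- the FI-defect mixed between two brackets -/
def fiDef {G : Type*} [AddCommGroup G] (f g : G → G → G → G)
    (x₁ x₂ x₃ x₄ x₅ : G) : G :=
  f x₁ x₂ (g x₃ x₄ x₅) - f (g x₁ x₂ x₃) x₄ x₅ - f x₃ (g x₁ x₂ x₄) x₅
    - f x₃ x₄ (g x₁ x₂ x₅)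

end Aux2

section Poly

variable {K G : Type*} [Field K] [CharZero K] [AddCommGroup G] [Module K G]

theorem poly5 (c₀ c₁ c₂ c₃ c₄ c₅ : G)
    (h : ∀ t : K, c₀ + t • c₁ + t ^ 2 • c₂ + t ^ 3 • c₃ + t ^ 4 • c₄ + t ^ 5 • c₅ = 0) :
    c₀ = 0 ∧ c₁ = 0 ∧ c₂ = 0 ∧ c₃ = 0 ∧ c₄ = 0 ∧ c₅ = 0 := by
  have h0 := h 0; have h1 := h 1; have h2 := h 2
  have h3 := h 3; have h4 := h 4; have h5 := h 5
  have e0 : c₀ = 0 := by simpa using h0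
  have e1 : (60 : K) • c₁ = 0 := by
    linear_combination (norm := module) (-137 : K) • h0 + (300 : K) • h1 - (300 : K) • h2
      + (200 : K) • h3 - (75 : K) • h4 + (12 : K) • h5
  have e2 : (24 : K) • c₂ = 0 := by
    linear_combination (norm := module) (45 : K) • h0 - (154 : K) • h1 + (214 : K) • h2
      - (156 : K) • h3 + (61 : K) • h4 - (10 : K) • h5
  have e3 : (24 : K) • c₃ = 0 := by
    linear_combination (norm := module) (-17 : K) • h0 + (71 : K) • h1 - (118 : K) • h2
      + (98 : K) • h3 - (41 : K) • h4 + (7 : K) • h5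
  have e4 : (24 : K) • c₄ = 0 := by
    linear_combination (norm := module) (3 : K) • h0 - (14 : K) • h1 + (26 : K) • h2
      - (24 : K) • h3 + (11 : K) • h4 - (2 : K) • h5
  have e5 : (120 : K) • c₅ = 0 := by
    linear_combination (norm := module) (-1 : K) • h0 + (5 : K) • h1 - (10 : K) • h2
      + (10 : K) • h3 - (5 : K) • h4 + (1 : K) • h5
  refine ⟨e0, ?_, ?_, ?_, ?_, ?_⟩
  · exact (smul_eq_zero.mp e1).resolve_left (by norm_num)
  · exact (smul_eq_zero.mp e2).resolve_left (by norm_num)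
  · exact (smul_eq_zero.mp e3).resolve_left (by norm_num)
  · exact (smul_eq_zero.mp e4).resolve_left (by norm_num)
  · exact (smul_eq_zero.mp e5).resolve_left (by norm_num)

theorem chain_top (N : G →ₗ[K] G) (d₀ d₁ d₂ d₃ d₄ : G)
    (h : ∀ t : K,
      (d₀ + t • d₁ + t ^ 2 • d₂ + t ^ 3 • d₃ + t ^ 4 • d₄)
        + t • N (d₀ + t • d₁ + t ^ 2 • d₂ + t ^ 3 • d₃ + t ^ 4 • d₄) = 0) :
    d₄ = 0 := by
  have h' : ∀ t : K, d₀ + t • (d₁ + N d₀) + t ^ 2 • (d₂ + N d₁) + t ^ 3 • (d₃ + N d₂)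
      + t ^ 4 • (d₄ + N d₃) + t ^ 5 • N d₄ = 0 := by
    intro t
    have ht := h t
    simp only [map_add, map_smul] at ht
    linear_combination (norm := module) ht
  obtain ⟨e0, e1, e2, e3, e4, e5⟩ := poly5 _ _ _ _ _ _ h'
  have f1 : d₁ = 0 := by rw [e0, map_zero, add_zero] at e1; exact e1
  have f2 : d₂ = 0 := by rw [f1, map_zero, add_zero] at e2; exact e2
  have f3 : d₃ = 0 := by rw [f2, map_zero, add_zero] at e3; exact e3
  rw [f3, map_zero, add_zero] at e4; exact e4

end Poly

set_option linter.unusedSectionVars false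

section Main

variable {K G : Type*} [Field K] [CharZero K] [AddCommGroup G] [Module K G]
variable {N : G →ₗ[K] G} {b : G → G → G → G}

theorem expand_slot3 {f : G → G → G → G} (hf : IsTrilinearMap K f) (t : K) (x y u v w : G) :
    f x y (u + t • v + t ^ 2 • w) = f x y u + t • f x y v + t ^ 2 • f x y w := by
  rw [t3a hf, t3a hf, t3s hf, t3s hf]

theorem expand_slot2 {f : G → G → G → G} (hf : IsTrilinearMap K f) (t : K) (x u v w z : G) :
    f x (u + t • v + t ^ 2 • w) z = f x u z + t • f x v z + t ^ 2 • f x w z := by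
  rw [t2a hf, t2a hf, t2s hf, t2s hf]

theorem expand_slot1 {f : G → G → G → G} (hf : IsTrilinearMap K f) (t : K) (u v w y z : G) :
    f (u + t • v + t ^ 2 • w) y z = f u y z + t • f v y z + t ^ 2 • f w y z := by
  rw [t1a hf, t1a hf, t1s hf, t1s hf]

theorem fund_deformed (hb : IsTrilinearMap K b) (hfi : FundIdent b)
    (hN : IsNijenhuis b N) : FundIdent (deformedBracket b N) := by
  intro x₁ x₂ x₃ x₄ x₅
  have hν : IsTrilinearMap K (nuB b N) := tri_nu hb
  have hm : IsTrilinearMap K (deformedBracket b N) := tri_deformed hb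
  have hst := star_eq hb hN
  -- claim 1 : (1 + t N) kills the FI-defect of `Pt`
  have claim1 : ∀ t : K,
      fiDef (Pt b N t) (Pt b N t) x₁ x₂ x₃ x₄ x₅
        + t • N (fiDef (Pt b N t) (Pt b N t) x₁ x₂ x₃ x₄ x₅) = 0 := by
    intro t
    have e1 := hst t x₁ x₂ (Pt b N t x₃ x₄ x₅)
    rw [← hst t x₃ x₄ x₅] at e1
    have e2 := hst t (Pt b N t x₁ x₂ x₃) x₄ x₅
    rw [← hst t x₁ x₂ x₃] at e2
    have e3 := hst t x₃ (Pt b N t x₁ x₂ x₄) x₅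
    rw [← hst t x₁ x₂ x₄] at e3
    have e4 := hst t x₃ x₄ (Pt b N t x₁ x₂ x₅)
    rw [← hst t x₁ x₂ x₅] at e4
    have F := hfi (x₁ + t • N x₁) (x₂ + t • N x₂) (x₃ + t • N x₃)
      (x₄ + t • N x₄) (x₅ + t • N x₅)
    simp only [fiDef, map_sub, map_add]
    linear_combination (norm := module) F + e2 + e3 + e4 - e1
  -- claim 2 : expansion of the defect in powers of t
  have claim2 : ∀ t : K,
      fiDef (Pt b N t) (Pt b N t) x₁ x₂ x₃ x₄ x₅ =
        fiDef b b x₁ x₂ x₃ x₄ x₅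
        + t • (fiDef b (nuB b N) x₁ x₂ x₃ x₄ x₅ + fiDef (nuB b N) b x₁ x₂ x₃ x₄ x₅)
        + t ^ 2 • (fiDef b (deformedBracket b N) x₁ x₂ x₃ x₄ x₅
            + fiDef (nuB b N) (nuB b N) x₁ x₂ x₃ x₄ x₅
            + fiDef (deformedBracket b N) b x₁ x₂ x₃ x₄ x₅)
        + t ^ 3 • (fiDef (nuB b N) (deformedBracket b N) x₁ x₂ x₃ x₄ x₅
            + fiDef (deformedBracket b N) (nuB b N) x₁ x₂ x₃ x₄ x₅)
        + t ^ 4 • fiDef (deformedBracket b N) (deformedBracket b N) x₁ x₂ x₃ x₄ x₅ := by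
    intro t
    simp only [fiDef, Pt, expand_slot1 hb, expand_slot1 hν, expand_slot1 hm,
      expand_slot2 hb, expand_slot2 hν, expand_slot2 hm,
      expand_slot3 hb, expand_slot3 hν, expand_slot3 hm]
    module
  have key : fiDef (deformedBracket b N) (deformedBracket b N) x₁ x₂ x₃ x₄ x₅ = 0 := by
    refine chain_top N (fiDef b b x₁ x₂ x₃ x₄ x₅)
      (fiDef b (nuB b N) x₁ x₂ x₃ x₄ x₅ + fiDef (nuB b N) b x₁ x₂ x₃ x₄ x₅)
      (fiDef b (deformedBracket b N) x₁ x₂ x₃ x₄ x₅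
        + fiDef (nuB b N) (nuB b N) x₁ x₂ x₃ x₄ x₅
        + fiDef (deformedBracket b N) b x₁ x₂ x₃ x₄ x₅)
      (fiDef (nuB b N) (deformedBracket b N) x₁ x₂ x₃ x₄ x₅
        + fiDef (deformedBracket b N) (nuB b N) x₁ x₂ x₃ x₄ x₅)
      (fiDef (deformedBracket b N) (deformedBracket b N) x₁ x₂ x₃ x₄ x₅)
      (fun t => ?_)
    rw [← claim2 t]
    exact claim1 t
  have := key
  simp only [fiDef] at this
  linear_combination (norm := abel) this

end Main

section Sum

variable {K G : Type*} [Field K] [AddCommGroup G] [Module K G]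
variable {N : G →ₗ[K] G} {b₁ b₂ : G → G → G → G}

theorem fund_sum_of_compat (hb₁ : IsTrilinearMap K b₁) (hb₂ : IsTrilinearMap K b₂)
    (hf₁ : FundIdent b₁) (hf₂ : FundIdent b₂) (hc : Compat b₁ b₂) :
    FundIdent (fun x y z => b₁ x y z + b₂ x y z) := by
  intro x₁ x₂ x₃ x₄ x₅
  dsimp only
  simp only [t1a hb₁, t1a hb₂, t2a hb₁, t2a hb₂, t3a hb₁, t3a hb₂]
  linear_combination (norm := abel)
    hf₁ x₁ x₂ x₃ x₄ x₅ + hf₂ x₁ x₂ x₃ x₄ x₅ + hc x₁ x₂ x₃ x₄ x₅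

theorem compat_of_fund_sum (hb₁ : IsTrilinearMap K b₁) (hb₂ : IsTrilinearMap K b₂)
    (hf₁ : FundIdent b₁) (hf₂ : FundIdent b₂)
    (hsum : FundIdent (fun x y z => b₁ x y z + b₂ x y z)) :
    Compat b₁ b₂ := by
  intro x₁ x₂ x₃ x₄ x₅
  have H := hsum x₁ x₂ x₃ x₄ x₅
  dsimp only at H
  simp only [t1a hb₁, t1a hb₂, t2a hb₁, t2a hb₂, t3a hb₁, t3a hb₂] at H
  linear_combination (norm := abel) H - hf₁ x₁ x₂ x₃ x₄ x₅ - hf₂ x₁ x₂ x₃ x₄ x₅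

theorem nij_sum (hN₁ : IsNijenhuis b₁ N) (hN₂ : IsNijenhuis b₂ N) :
    IsNijenhuis (fun x y z => b₁ x y z + b₂ x y z) N := by
  intro x y z
  dsimp only
  rw [hN₁ x y z, hN₂ x y z]
  simp only [map_add, map_sub]
  abel

theorem deformed_sum :
    deformedBracket (fun x y z => b₁ x y z + b₂ x y z) N
      = fun x y z => deformedBracket b₁ N x y z + deformedBracket b₂ N x y z := by
  funext x y z
  simp only [deformedBracket, map_add]
  abel

end Sum


end Defs

theorem stmt5 {K G : Type*} [Field K] [CharZero K] [AddCommGroup G] [Module K G]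
    (b₁ b₂ : G → G → G → G) (h₁ : Is3Lie K b₁) (h₂ : Is3Lie K b₂)
    (hc : Compat b₁ b₂) (N : G →ₗ[K] G)
    (hN₁ : IsNijenhuis b₁ N) (hN₂ : IsNijenhuis b₂ N) :
    Is3Lie K (deformedBracket b₁ N) ∧ Is3Lie K (deformedBracket b₂ N) ∧
    Compat (deformedBracket b₁ N) (deformedBracket b₂ N) ∧
    (∀ x y z, N (deformedBracket b₁ N x y z) = b₁ (N x) (N y) (N z)) ∧
    (∀ x y z, N (deformedBracket b₂ N x y z) = b₂ (N x) (N y) (N z)) := by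
  obtain ⟨hb₁, hsk₁, hf₁⟩ := h₁
  obtain ⟨hb₂, hsk₂, hf₂⟩ := h₂
  have fund₁ : FundIdent (deformedBracket b₁ N) := fund_deformed hb₁ hf₁ hN₁
  have fund₂ : FundIdent (deformedBracket b₂ N) := fund_deformed hb₂ hf₂ hN₂
  have hScompat : Compat (deformedBracket b₁ N) (deformedBracket b₂ N) := by
    have hSfund : FundIdent (deformedBracket (fun x y z => b₁ x y z + b₂ x y z) N) :=
      fund_deformed (tri_add hb₁ hb₂) (fund_sum_of_compat hb₁ hb₂ hf₁ hf₂ hc)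
        (nij_sum hN₁ hN₂)
    rw [deformed_sum] at hSfund
    exact compat_of_fund_sum (tri_deformed hb₁) (tri_deformed hb₂) fund₁ fund₂ hSfund
  refine ⟨⟨tri_deformed hb₁, skew_deformed hsk₁, fund₁⟩,
    ⟨tri_deformed hb₂, skew_deformed hsk₂, fund₂⟩, hScompat, fun x y z => ?_, fun x y z => ?_⟩
  · simp only [deformedBracket]
    exact (hN₁ x y z).symm
  · simp only [deformedBracket]
    exact (hN₂ x y z).symm
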